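/- For a = 1, the wavefunction Z(x,ℏ) = 1 + ∑_{k≥1} x^k/(k! ℏ^k) ∏_{j=1}^{k-1} 1/(1-jℏ) satisfies (x·ŷ² + ŷ + 1)Z = 0 where ŷ = -ℏ ∂/∂x, recovering the quantum curve for monotone Hurwitz numbers. -/

import Mathlib

open PowerSeries

/-- The formal variable `ℏ`, as a Laurent series over `ℚ`. -/
noncomputable def hbar : LaurentSeries ℚ := HahnSeries.single 1 1

/-- The `a = 1` wave function `Z(x,ℏ) = 1 + ∑_{k≥1} x^k/(k! ℏ^k) ∏_{j=1}^{k-1} 1/(1-jℏ)`. -/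
noncomputable def waveFunctionOne : PowerSeries (LaurentSeries ℚ) :=
  PowerSeries.mk fun n =>
    if n = 0 then 1
    else
      ((n.factorial : LaurentSeries ℚ) * hbar ^ n)⁻¹ *
        ∏ j ∈ Finset.range (n - 1), (1 - ((j : LaurentSeries ℚ) + 1) * hbar)⁻¹

/-- The operator `ŷ = -ℏ ∂/∂x` acting on `ℚ((ℏ))[[x]]`. -/
noncomputable def yhat (f : PowerSeries (LaurentSeries ℚ)) : PowerSeries (LaurentSeries ℚ) :=
  -(PowerSeries.C hbar) * f.derivativeFun

namespace QCAux

local notation "K" => LaurentSeries ℚ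

lemma natCast_eq_C (n : ℕ) : (n : K) = HahnSeries.C (n : ℚ) := by
  rw [map_natCast]

lemma nat_ne_zero {n : ℕ} (h : n ≠ 0) : (n : K) ≠ 0 := by
  rw [natCast_eq_C]; exact HahnSeries.C_ne_zero (by exact_mod_cast h)

lemma hbar_ne_zero : hbar ≠ 0 := HahnSeries.single_ne_zero one_ne_zero

lemma one_sub_ne_zero (n : ℕ) : (1 : K) - (n : K) * hbar ≠ 0 := by
  intro h
  have h2 : ((1 : K) - (n : K) * hbar).coeff 0 = 0 := by rw [h]; rfl
  rw [HahnSeries.coeff_sub, natCast_eq_C, HahnSeries.C_apply, hbar,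
    HahnSeries.single_mul_single, zero_add, HahnSeries.coeff_one,
    HahnSeries.coeff_single_of_ne (by norm_num)] at h2
  simp at h2

set_option maxHeartbeats 1000000 in
lemma wave_rec (n : ℕ) :
    PowerSeries.coeff (n + 1) waveFunctionOne *
      (((n : K) + 1) * hbar * (1 - (n : K) * hbar)) =
    PowerSeries.coeff n waveFunctionOne := by
  cases n with
  | zero =>
      have h1 : PowerSeries.coeff 1 waveFunctionOne = hbar⁻¹ := by
        simp [waveFunctionOne]
      have h0 : PowerSeries.coeff 0 waveFunctionOne = 1 := by
        simp [waveFunctionOne]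
      rw [h1, h0]
      push_cast
      have := inv_mul_cancel₀ hbar_ne_zero
      linear_combination this
  | succ m =>
      simp only [waveFunctionOne, PowerSeries.coeff_mk, if_neg (Nat.succ_ne_zero _),
        Nat.succ_sub_one]
      rw [Finset.prod_range_succ]
      have hf1 : ((m + 1).factorial : K) ≠ 0 := nat_ne_zero (Nat.factorial_ne_zero _)
      have hA : (1 : K) - ((m : K) + 1) * hbar ≠ 0 := by
        have := one_sub_ne_zero (m + 1); push_cast at this; exact this
      have hfac : ((m + 1 + 1).factorial : K) = ((m : K) + 2) * ((m + 1).factorial : K) := by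
        rw [Nat.factorial_succ]; push_cast; ring
      have hh : hbar ≠ 0 := hbar_ne_zero
      have hc : ((m : K) + 2) ≠ 0 := by
        have := nat_ne_zero (n := m + 2) (by omega); push_cast at this; exact this
      rw [hfac]
      have hiA : ((1:K) - ((m : K) + 1) * hbar)⁻¹ * ((1:K) - ((m : K) + 1) * hbar) = 1 :=
        inv_mul_cancel₀ hA
      have hih : hbar⁻¹ * hbar = 1 := inv_mul_cancel₀ hh
      have hic : ((m : K) + 2)⁻¹ * ((m : K) + 2) = 1 := inv_mul_cancel₀ hc
      have e1 : (((m : K) + 2) * ((m + 1).factorial : K) * hbar ^ (m + 1 + 1))⁻¹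
          = ((m : K) + 2)⁻¹ * (((m + 1).factorial : K) * hbar ^ (m + 1))⁻¹ * hbar⁻¹ := by
        rw [pow_succ]
        rw [mul_inv, mul_inv, mul_inv]
        ring
      rw [e1]
      push_cast
      set P := ∏ j ∈ Finset.range m, ((1:K) - ((j : K) + 1) * hbar)⁻¹ with hP
      set R := (((m+1).factorial : K) * hbar ^ (m+1))⁻¹ * P with hR
      set A := (1:K) - ((m : K) + 1) * hbar with hAdef
      linear_combination (R * (hbar⁻¹*hbar) * (A⁻¹*A)) * hic + (R * (A⁻¹*A)) * hih + R * hiA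

lemma coeff_yhat (f : PowerSeries (LaurentSeries ℚ)) (n : ℕ) :
    PowerSeries.coeff n (yhat f) =
      -(hbar * (PowerSeries.coeff (n + 1) f * ((n : K) + 1))) := by
  have h1 : yhat f = -(PowerSeries.C hbar * f.derivativeFun) := by
    unfold yhat; ring
  rw [h1]
  have h2 : PowerSeries.coeff n (-(PowerSeries.C hbar * f.derivativeFun))
      = -(PowerSeries.coeff n (PowerSeries.C hbar * f.derivativeFun)) :=
    map_neg _ _
  rw [h2]
  have h3 : PowerSeries.coeff n (PowerSeries.C hbar * f.derivativeFun)
      = hbar * PowerSeries.coeff n f.derivativeFun := PowerSeries.coeff_C_mul n _ hbar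
  rw [h3]
  have h4 : PowerSeries.coeff n f.derivativeFun
      = PowerSeries.coeff (n + 1) f * ((n : K) + 1) := PowerSeries.coeff_derivativeFun f n
  rw [h4]

end QCAux

/-- The quantum curve for monotone Hurwitz numbers: `(x·ŷ² + ŷ + 1) Z = 0`. -/
theorem quantum_curve_monotone :
    PowerSeries.X * yhat (yhat waveFunctionOne) + yhat waveFunctionOne +
      waveFunctionOne = 0 := by
  apply PowerSeries.ext
  intro n
  rw [map_add, map_add, map_zero]
  cases n with
  | zero =>
      rw [PowerSeries.coeff_zero_X_mul, QCAux.coeff_yhat]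
      have h := QCAux.wave_rec 0
      have h0 : PowerSeries.coeff 0 waveFunctionOne = 1 := by simp [waveFunctionOne]
      rw [h0] at h ⊢
      push_cast at h ⊢
      linear_combination -h
  | succ m =>
      rw [PowerSeries.coeff_succ_X_mul, QCAux.coeff_yhat, QCAux.coeff_yhat]
      have h := QCAux.wave_rec (m + 1)
      push_cast at h ⊢
      linear_combination -h
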